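/- Let Π be a Borel measure on ℝ^m, let a : ℝ^m → ℝ^m be continuous, let x* ∈ ℝ^m and ε* > 0, and suppose that for every x with ‖x − x*‖ ≤ ε* and every v ∈ ℝ^m \ {0}, Π({u : ⟨a(x+u) − a(x), v⟩ ≠ 0}) = +∞. Then γ_n := inf { Π({u : ‖u‖ ≥ 1/n and ⟨a(x+u) − a(x), v⟩ ≠ 0}) : ‖x − x*‖ ≤ ε*, v ∈ ℝ^m \ {0} } tends to +∞ as n → ∞. -/
import Mathlib


open scoped RealInnerProductSpace ENNReal
open MeasureTheory Filter Set

namespace UniformJumpAux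

variable {m : ℕ}

/-- The set of jumps of size at least `1/n` which move `a` in direction `p.2`. -/
def S (a : EuclideanSpace ℝ (Fin m) → EuclideanSpace ℝ (Fin m)) (n : ℕ)
    (p : EuclideanSpace ℝ (Fin m) × EuclideanSpace ℝ (Fin m)) :
    Set (EuclideanSpace ℝ (Fin m)) :=
  {u | 1 / (n : ℝ) ≤ ‖u‖ ∧ ⟪a (p.1 + u) - a p.1, p.2⟫ ≠ 0}

lemma S_mono (a : EuclideanSpace ℝ (Fin m) → EuclideanSpace ℝ (Fin m))
    {n n' : ℕ} (h1 : 1 ≤ n) (h2 : n ≤ n')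
    (p : EuclideanSpace ℝ (Fin m) × EuclideanSpace ℝ (Fin m)) :
    S a n p ⊆ S a n' p := by
  intro u hu
  refine ⟨le_trans ?_ hu.1, hu.2⟩
  apply one_div_le_one_div_of_le
  · exact_mod_cast h1
  · exact_mod_cast h2

lemma inner_cont (a : EuclideanSpace ℝ (Fin m) → EuclideanSpace ℝ (Fin m))
    (ha : Continuous a) (u : EuclideanSpace ℝ (Fin m)) :
    Continuous (fun p : EuclideanSpace ℝ (Fin m) × EuclideanSpace ℝ (Fin m) =>
      ⟪a (p.1 + u) - a p.1, p.2⟫) := by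
  exact Continuous.inner
    (((ha.comp (continuous_fst.add continuous_const))).sub (ha.comp continuous_fst))
    continuous_snd

/-- Lower semicontinuity of `q ↦ μ (S a n q)`, in the form needed. -/
lemma lsc (μ : Measure (EuclideanSpace ℝ (Fin m)))
    (a : EuclideanSpace ℝ (Fin m) → EuclideanSpace ℝ (Fin m)) (ha : Continuous a)
    (n : ℕ) (p : EuclideanSpace ℝ (Fin m) × EuclideanSpace ℝ (Fin m))
    {M : ℝ≥0∞} (hM : M < μ (S a n p)) :
    ∀ᶠ q in nhds p, M < μ (S a n q) := by
  by_contra hcon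
  rw [Filter.not_eventually] at hcon
  simp only [not_lt] at hcon
  obtain ⟨q, hq, hqM⟩ := Filter.exists_seq_forall_of_frequently hcon
  -- tails intersections
  set T : ℕ → Set (EuclideanSpace ℝ (Fin m)) :=
    fun k => ⋂ (j) (_ : k ≤ j), S a n (q j) with hT
  have hTmono : Monotone T := by
    intro k k' hkk'
    intro u hu
    exact mem_iInter₂.2 fun j hj => mem_iInter₂.1 hu j (le_trans hkk' hj)
  have hsub : S a n p ⊆ ⋃ k, T k := by
    intro u hu
    have hne : ⟪a (p.1 + u) - a p.1, p.2⟫ ≠ 0 := hu.2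
    have hev : ∀ᶠ k in atTop, ⟪a ((q k).1 + u) - a (q k).1, (q k).2⟫ ≠ 0 :=
      (((inner_cont a ha u).tendsto p).comp hq).eventually_ne hne
    obtain ⟨K, hK⟩ := eventually_atTop.1 hev
    exact mem_iUnion.2 ⟨K, mem_iInter₂.2 fun j hj => ⟨hu.1, hK j hj⟩⟩
  have hle : μ (S a n p) ≤ M := by
    calc μ (S a n p) ≤ μ (⋃ k, T k) := measure_mono hsub
      _ = ⨆ k, μ (T k) := (hTmono.directed_le).measure_iUnion
      _ ≤ M := iSup_le fun k =>
          le_trans (measure_mono (iInter₂_subset k le_rfl)) (hqM k)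
  exact absurd hM (not_lt.2 hle)

end UniformJumpAux

/-- Dini-type lemma: under condition (1.11) in a ball around `x*`, the uniform (over the ball
and over directions) mass of jumps of size `≥ 1/n` that move `a` tends to infinity. -/
theorem uniform_jump_mass_tendsto_top (m : ℕ)
    (μ : Measure (EuclideanSpace ℝ (Fin m)))
    (a : EuclideanSpace ℝ (Fin m) → EuclideanSpace ℝ (Fin m)) (ha : Continuous a)
    (xs : EuclideanSpace ℝ (Fin m)) (εs : ℝ) (hεs : 0 < εs)
    (h : ∀ x : EuclideanSpace ℝ (Fin m), ‖x - xs‖ ≤ εs →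
      ∀ v : EuclideanSpace ℝ (Fin m), v ≠ 0 →
        μ {u | ⟪a (x + u) - a x, v⟫ ≠ 0} = ⊤) :
    Tendsto (fun n : ℕ =>
        ⨅ (x : EuclideanSpace ℝ (Fin m)) (_ : ‖x - xs‖ ≤ εs)
          (v : EuclideanSpace ℝ (Fin m)) (_ : v ≠ 0),
          μ {u | 1 / (n : ℝ) ≤ ‖u‖ ∧ ⟪a (x + u) - a x, v⟫ ≠ 0})
      atTop (nhds ⊤) := by
  classical
  open UniformJumpAux in
  rw [ENNReal.tendsto_nhds_top_iff_nnreal]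
  intro b
  set M : ℝ≥0∞ := (b : ℝ≥0∞) + 1 with hMdef
  have hMlt : (b : ℝ≥0∞) < M := ENNReal.lt_add_right ENNReal.coe_ne_top one_ne_zero
  set K : Set (EuclideanSpace ℝ (Fin m) × EuclideanSpace ℝ (Fin m)) := Metric.closedBall xs εs ×ˢ Metric.sphere 0 1 with hKdef
  have hKcomp : IsCompact K :=
    (isCompact_closedBall xs εs).prod (isCompact_sphere 0 1)
  -- pointwise: for each p in K some n with large measure
  have hexists : ∀ p ∈ K, ∃ n : ℕ, 1 ≤ n ∧ M < μ (S a n p) := by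
    intro p hp
    have hx : ‖p.1 - xs‖ ≤ εs := by
      have := hp.1
      rwa [Metric.mem_closedBall, dist_eq_norm] at this
    have hv : p.2 ≠ 0 := by
      have := hp.2
      rw [mem_sphere_zero_iff_norm] at this
      intro h0; rw [h0, norm_zero] at this; norm_num at this
    have htop : μ {u | ⟪a (p.1 + u) - a p.1, p.2⟫ ≠ 0} = ⊤ := h p.1 hx p.2 hv
    set T : ℕ → Set (EuclideanSpace ℝ (Fin m)) := fun k => S a (k + 1) p with hTdef
    have hTmono : Monotone T := fun k k' hkk' =>
      S_mono a (Nat.le_add_left 1 k) (by omega) p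
    have hTunion : (⋃ k, T k) = {u | ⟪a (p.1 + u) - a p.1, p.2⟫ ≠ 0} := by
      apply Set.Subset.antisymm
      · exact iUnion_subset fun k u hu => hu.2
      · intro u hu
        have hu0 : u ≠ 0 := by
          intro h0
          apply hu
          simp [h0]
        have hnorm : 0 < ‖u‖ := norm_pos_iff.2 hu0
        obtain ⟨k, hk⟩ := exists_nat_one_div_lt hnorm
        exact mem_iUnion.2 ⟨k, ⟨by push_cast at hk ⊢; linarith, hu⟩⟩
    have htend : Tendsto (μ ∘ T) atTop (nhds ⊤) := by
      have := tendsto_measure_iUnion_atTop (μ := μ) hTmono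
      rwa [hTunion, htop] at this
    have : ∀ᶠ k in atTop, M < (μ ∘ T) k :=
      htend.eventually (eventually_gt_nhds (by simp [hMdef, lt_top_iff_ne_top]))
    obtain ⟨k, hk⟩ := this.exists
    exact ⟨k + 1, Nat.le_add_left 1 k, hk⟩
  choose! nn hnn1 hnnM using hexists
  -- open cover and compactness
  have hU : ∀ p ∈ K, {q : EuclideanSpace ℝ (Fin m) × EuclideanSpace ℝ (Fin m) | M < μ (S a (nn p) q)} ∈ nhds p :=
    fun p hp => lsc μ a ha (nn p) p (hnnM p hp)
  obtain ⟨t, htK, hcov⟩ := hKcomp.elim_nhds_subcover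
    (fun p => {q : EuclideanSpace ℝ (Fin m) × EuclideanSpace ℝ (Fin m) | M < μ (S a (nn p) q)}) hU
  set N : ℕ := max 1 (t.sup nn) with hNdef
  have hN1 : 1 ≤ N := le_max_left _ _
  have hbig : ∀ q ∈ K, M ≤ μ (S a N q) := by
    intro q hq
    obtain ⟨p, hpt, hpq⟩ := Set.mem_iUnion₂.1 (hcov hq)
    have hle : S a (nn p) q ⊆ S a N q :=
      S_mono a (hnn1 p (htK p hpt)) (le_max_of_le_right (Finset.le_sup hpt)) q
    exact le_trans (le_of_lt hpq) (measure_mono hle)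
  -- conclude
  filter_upwards [eventually_ge_atTop N] with n hn
  refine lt_of_lt_of_le hMlt (le_iInf fun x => le_iInf fun hx => le_iInf fun v =>
    le_iInf fun hv => ?_)
  set w : EuclideanSpace ℝ (Fin m) := ‖v‖⁻¹ • v with hwdef
  have hwK : (x, w) ∈ K := by
    constructor
    · rw [Metric.mem_closedBall, dist_eq_norm]; exact hx
    · rw [mem_sphere_zero_iff_norm]
      exact norm_smul_inv_norm (𝕜 := ℝ) hv
  have hseteq : {u | 1 / (n : ℝ) ≤ ‖u‖ ∧ ⟪a (x + u) - a x, v⟫ ≠ 0} = S a n (x, w) := by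
    ext u
    simp only [S, mem_setOf_eq, hwdef]
    constructor
    · rintro ⟨h1, h2⟩
      refine ⟨h1, ?_⟩
      rw [real_inner_smul_right]
      exact mul_ne_zero (inv_ne_zero (norm_ne_zero_iff.2 hv)) h2
    · rintro ⟨h1, h2⟩
      refine ⟨h1, fun h0 => h2 ?_⟩
      rw [real_inner_smul_right, h0, mul_zero]
  rw [hseteq]
  exact le_trans (hbig (x, w) hwK) (measure_mono (S_mono a hN1 hn (x, w)))
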